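/- The positive Boolean closure of the universal fragment of HyperLTL collapses: every formula of PBC(∀*HyperLTL) — i.e., a finite positive Boolean combination (∧,∨) of universally quantified HyperLTL formulas ∀π₁⋯∀πₙ φ with φ quantifier-free — is equivalent over all teams to a single ∀*HyperLTL formula. -/

import Mathlib

/-- A trace over `AP`: an infinite sequence of sets of atomic propositions. -/
def Trace (AP : Type) := ℕ → Set AP

/-- The suffix `t[i,∞]` of a trace. -/
def Trace.shift {AP : Type} (t : Trace AP) (i : ℕ) : Trace AP := fun n => t (n + i)

/-- `T[f,∞] = {t[s,∞] | t ∈ T, s ∈ f(t)}`. -/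
def teamShift {AP : Type} (T : Set (Trace AP)) (f : Trace AP → Set ℕ) : Set (Trace AP) :=
  {s | ∃ t ∈ T, ∃ i ∈ f t, s = t.shift i}

/-- `f : T → 𝒫(ℕ)⁺`: assigns a nonempty set of time steps to every trace of the team. -/
def goodF {AP : Type} (T : Set (Trace AP)) (f : Trace AP → Set ℕ) : Prop :=
  ∀ t ∈ T, (f t).Nonempty

/-- The ordering `f' < f` on choice functions (on the domain `T'`). -/
def fLT {AP : Type} (T' : Set (Trace AP)) (f' f : Trace AP → Set ℕ) : Prop :=
  ∀ t ∈ T', sInf (f' t) ≤ sInf (f t) ∧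
    ∀ m, IsGreatest (f t) m → ∃ m', IsGreatest (f' t) m' ∧ m' < m

/-- Formulas of (NNF) LTL, extended with the Boolean disjunction `boolOr` (⊕)
and the Boolean negation `bNeg` (∼). -/
inductive TForm (AP : Type) where
  | pos : AP → TForm AP
  | neg : AP → TForm AP
  | and : TForm AP → TForm AP → TForm AP
  | or : TForm AP → TForm AP → TForm AP
  | boolOr : TForm AP → TForm AP → TForm AP
  | bNeg : TForm AP → TForm AP
  | next : TForm AP → TForm AP
  | glob : TForm AP → TForm AP
  | untl : TForm AP → TForm AP → TForm AP

/-- Plain LTL formulas (negation normal form; no ⊕, no ∼). -/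
def TForm.isLTL {AP : Type} : TForm AP → Prop
  | .pos _ => True
  | .neg _ => True
  | .and φ ψ => φ.isLTL ∧ ψ.isLTL
  | .or φ ψ => φ.isLTL ∧ ψ.isLTL
  | .boolOr _ _ => False
  | .bNeg _ => False
  | .next φ => φ.isLTL
  | .glob φ => φ.isLTL
  | .untl φ ψ => φ.isLTL ∧ ψ.isLTL

/-- TeamLTL(⊕) formulas: no Boolean negation. -/
def TForm.noBNeg {AP : Type} : TForm AP → Prop
  | .pos _ => True
  | .neg _ => True
  | .and φ ψ => φ.noBNeg ∧ ψ.noBNeg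
  | .or φ ψ => φ.noBNeg ∧ ψ.noBNeg
  | .boolOr φ ψ => φ.noBNeg ∧ ψ.noBNeg
  | .bNeg _ => False
  | .next φ => φ.noBNeg
  | .glob φ => φ.noBNeg
  | .untl φ ψ => φ.noBNeg ∧ ψ.noBNeg

/-- Ordinary single-trace LTL satisfaction (⊕ read as ∨ and ∼ as ¬). -/
def TForm.sat {AP : Type} : Trace AP → TForm AP → Prop
  | t, .pos p => p ∈ t 0
  | t, .neg p => p ∉ t 0
  | t, .and φ ψ => TForm.sat t φ ∧ TForm.sat t ψ
  | t, .or φ ψ => TForm.sat t φ ∨ TForm.sat t ψ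
  | t, .boolOr φ ψ => TForm.sat t φ ∨ TForm.sat t ψ
  | t, .bNeg φ => ¬ TForm.sat t φ
  | t, .next φ => TForm.sat (t.shift 1) φ
  | t, .glob φ => ∀ i, TForm.sat (t.shift i) φ
  | t, .untl φ ψ => ∃ i, TForm.sat (t.shift i) ψ ∧ ∀ j < i, TForm.sat (t.shift j) φ

/-- Lax team semantics of TeamLTL(⊕,∼). -/
def TForm.teamSat {AP : Type} : Set (Trace AP) → TForm AP → Prop
  | T, .pos p => ∀ t ∈ T, p ∈ t 0
  | T, .neg p => ∀ t ∈ T, p ∉ t 0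
  | T, .and φ ψ => TForm.teamSat T φ ∧ TForm.teamSat T ψ
  | T, .or φ ψ => ∃ T₁ T₂, T₁ ∪ T₂ = T ∧ TForm.teamSat T₁ φ ∧ TForm.teamSat T₂ ψ
  | T, .boolOr φ ψ => TForm.teamSat T φ ∨ TForm.teamSat T ψ
  | T, .bNeg φ => ¬ TForm.teamSat T φ
  | T, .next φ => TForm.teamSat (teamShift T (fun _ => {1})) φ
  | T, .glob φ => ∀ f, goodF T f → TForm.teamSat (teamShift T f) φ
  | T, .untl φ ψ => ∃ f, goodF T f ∧ TForm.teamSat (teamShift T f) ψ ∧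
      ∀ f', goodF {t ∈ T | ¬ IsGreatest (f t) 0} f' →
        fLT {t ∈ T | ¬ IsGreatest (f t) 0} f' f →
        ({t ∈ T | ¬ IsGreatest (f t) 0} = (∅ : Set (Trace AP)) ∨
          TForm.teamSat (teamShift {t ∈ T | ¬ IsGreatest (f t) 0} f') φ)

/-- HyperLTL formulas (quantifiers may occur anywhere). -/
inductive HForm (AP V : Type) where
  | atom : AP → V → HForm AP V
  | hnot : HForm AP V → HForm AP V
  | hand : HForm AP V → HForm AP V → HForm AP V
  | hor : HForm AP V → HForm AP V → HForm AP V
  | hnext : HForm AP V → HForm AP V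
  | hglob : HForm AP V → HForm AP V
  | huntl : HForm AP V → HForm AP V → HForm AP V
  | hall : V → HForm AP V → HForm AP V
  | hex : V → HForm AP V → HForm AP V

/-- Shift a trace assignment: `Π[i,∞]`. -/
def shiftA {AP V : Type} (A : V → Trace AP) (i : ℕ) : V → Trace AP := fun v => (A v).shift i

/-- HyperLTL satisfaction `Π ⊨_T φ`. -/
def HForm.hsat {AP V : Type} [DecidableEq V] :
    (V → Trace AP) → Set (Trace AP) → HForm AP V → Prop
  | A, _, .atom a v => a ∈ A v 0
  | A, T, .hnot φ => ¬ HForm.hsat A T φ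
  | A, T, .hand φ ψ => HForm.hsat A T φ ∧ HForm.hsat A T ψ
  | A, T, .hor φ ψ => HForm.hsat A T φ ∨ HForm.hsat A T ψ
  | A, T, .hnext φ => HForm.hsat (shiftA A 1) T φ
  | A, T, .hglob φ => ∀ i, HForm.hsat (shiftA A i) T φ
  | A, T, .huntl φ ψ => ∃ i, HForm.hsat (shiftA A i) T ψ ∧
      ∀ j < i, HForm.hsat (shiftA A j) T φ
  | A, T, .hall v φ => ∀ t ∈ T, HForm.hsat (Function.update A v t) T φ
  | A, T, .hex v φ => ∃ t ∈ T, HForm.hsat (Function.update A v t) T φ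

/-- Quantifier-free HyperLTL formulas. -/
def HForm.QFree {AP V : Type} : HForm AP V → Prop
  | .atom _ _ => True
  | .hnot φ => φ.QFree
  | .hand φ ψ => φ.QFree ∧ ψ.QFree
  | .hor φ ψ => φ.QFree ∧ ψ.QFree
  | .hnext φ => φ.QFree
  | .hglob φ => φ.QFree
  | .huntl φ ψ => φ.QFree ∧ ψ.QFree
  | .hall _ _ => False
  | .hex _ _ => False

/-- All trace variables occurring in a HyperLTL formula. -/
def HForm.vars {AP V : Type} : HForm AP V → Set V
  | .atom _ v => {v}
  | .hnot φ => φ.vars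
  | .hand φ ψ => φ.vars ∪ ψ.vars
  | .hor φ ψ => φ.vars ∪ ψ.vars
  | .hnext φ => φ.vars
  | .hglob φ => φ.vars
  | .huntl φ ψ => φ.vars ∪ ψ.vars
  | .hall v φ => insert v φ.vars
  | .hex v φ => insert v φ.vars

/-- Free trace variables of a HyperLTL formula. -/
def HForm.free {AP V : Type} : HForm AP V → Set V
  | .atom _ v => {v}
  | .hnot φ => φ.free
  | .hand φ ψ => φ.free ∪ ψ.free
  | .hor φ ψ => φ.free ∪ ψ.free
  | .hnext φ => φ.free
  | .hglob φ => φ.free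
  | .huntl φ ψ => φ.free ∪ ψ.free
  | .hall v φ => φ.free \ {v}
  | .hex v φ => φ.free \ {v}

/-- Rename the trace variables of a HyperLTL formula. -/
def HForm.rename {AP V : Type} (ρ : V → V) : HForm AP V → HForm AP V
  | .atom a v => .atom a (ρ v)
  | .hnot φ => .hnot (φ.rename ρ)
  | .hand φ ψ => .hand (φ.rename ρ) (ψ.rename ρ)
  | .hor φ ψ => .hor (φ.rename ρ) (ψ.rename ρ)
  | .hnext φ => .hnext (φ.rename ρ)
  | .hglob φ => .hglob (φ.rename ρ)
  | .huntl φ ψ => .huntl (φ.rename ρ) (ψ.rename ρ)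
  | .hall v φ => .hall (ρ v) (φ.rename ρ)
  | .hex v φ => .hex (ρ v) (φ.rename ρ)

/-- Hyperification `φ ↦ φ(π)`: replace each proposition `p` by `p_π`. -/
def TForm.hyperify {AP V : Type} (π : V) : TForm AP → HForm AP V
  | .pos p => .atom p π
  | .neg p => .hnot (.atom p π)
  | .and φ ψ => .hand (φ.hyperify π) (ψ.hyperify π)
  | .or φ ψ => .hor (φ.hyperify π) (ψ.hyperify π)
  | .boolOr φ ψ => .hor (φ.hyperify π) (ψ.hyperify π)
  | .bNeg φ => .hnot (φ.hyperify π)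
  | .next φ => .hnext (φ.hyperify π)
  | .glob φ => .hglob (φ.hyperify π)
  | .untl φ ψ => .huntl (φ.hyperify π) (ψ.hyperify π)

/-- A tautological NNF LTL formula. -/
def TForm.verum {AP : Type} [Inhabited AP] : TForm AP := .or (.pos default) (.neg default)

/-- Negation normal form of the (classical) negation of an NNF LTL formula. -/
def TForm.dual {AP : Type} [Inhabited AP] : TForm AP → TForm AP
  | .pos p => .neg p
  | .neg p => .pos p
  | .and φ ψ => .or φ.dual ψ.dual
  | .or φ ψ => .and φ.dual ψ.dual
  | .boolOr φ ψ => .and φ.dual ψ.dual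
  | .bNeg φ => φ
  | .next φ => .next φ.dual
  | .glob φ => .untl TForm.verum φ.dual
  | .untl φ ψ => .or (.glob ψ.dual) (.untl ψ.dual (.and φ.dual ψ.dual))

/-- The shorthand `∃β := ∼β^d`. -/
def TForm.tExists {AP : Type} [Inhabited AP] (β : TForm AP) : TForm AP := .bNeg β.dual

mutual
/-- Erase trace-variable subscripts: turn a quantifier-free HyperLTL formula into
an (NNF) LTL formula, pushing classical negations inward. -/
def deH {AP V : Type} [Inhabited AP] : HForm AP V → TForm AP
  | .atom a _ => .pos a
  | .hnot φ => deHn φ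
  | .hand φ ψ => .and (deH φ) (deH ψ)
  | .hor φ ψ => .or (deH φ) (deH ψ)
  | .hnext φ => .next (deH φ)
  | .hglob φ => .glob (deH φ)
  | .huntl φ ψ => .untl (deH φ) (deH ψ)
  | .hall _ φ => deH φ
  | .hex _ φ => deH φ

/-- NNF of the negation of an erased quantifier-free HyperLTL formula. -/
def deHn {AP V : Type} [Inhabited AP] : HForm AP V → TForm AP
  | .atom a _ => .neg a
  | .hnot φ => deH φ
  | .hand φ ψ => .or (deHn φ) (deHn ψ)
  | .hor φ ψ => .and (deHn φ) (deHn ψ)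
  | .hnext φ => .next (deHn φ)
  | .hglob φ => .untl TForm.verum (deHn φ)
  | .huntl φ ψ => .or (.glob (deHn ψ)) (.untl (deHn ψ) (.and (deHn φ) (deHn ψ)))
  | .hall _ φ => deHn φ
  | .hex _ φ => deHn φ
end

/-- `φ₀ ∨ φ₁ ∨ ⋯ ∨ φₘ` for a nonempty family of HyperLTL formulas. -/
def HForm.bigOrF {AP V : Type} {m : ℕ} (f : Fin (m + 1) → HForm AP V) : HForm AP V :=
  (List.ofFn fun i : Fin m => f i.succ).foldr .hor (f 0)

/-- `φ₀ ∧ φ₁ ∧ ⋯ ∧ φₘ` for a nonempty family of HyperLTL formulas. -/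
def HForm.bigAndF {AP V : Type} {m : ℕ} (f : Fin (m + 1) → HForm AP V) : HForm AP V :=
  (List.ofFn fun i : Fin m => f i.succ).foldr .hand (f 0)

/-- `φ₀ ⊕ φ₁ ⊕ ⋯ ⊕ φₘ` for a nonempty family of team formulas. -/
def TForm.bigBoolOrF {AP : Type} {m : ℕ} (f : Fin (m + 1) → TForm AP) : TForm AP :=
  (List.ofFn fun i : Fin m => f i.succ).foldr .boolOr (f 0)

/-- `φ₀ ∧ φ₁ ∧ ⋯ ∧ φₘ` for a nonempty family of team formulas. -/
def TForm.bigAndF {AP : Type} {m : ℕ} (f : Fin (m + 1) → TForm AP) : TForm AP :=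
  (List.ofFn fun i : Fin m => f i.succ).foldr .and (f 0)

/-- Apply a quantifier block (`true` = ∀, `false` = ∃). -/
def applyBlock {AP V : Type} (qs : List (Bool × V)) (φ : HForm AP V) : HForm AP V :=
  qs.foldr (fun q acc => if q.1 then .hall q.2 acc else .hex q.2 acc) φ

/-- The dual of a quantifier block. -/
def dualBlock {V : Type} (qs : List (Bool × V)) : List (Bool × V) :=
  qs.map fun q => (!q.1, q.2)

/-- The positive Boolean closure of a logic, over base formulas. -/
inductive PBCform (AP V : Type) where
  | base : HForm AP V → PBCform AP V
  | pand : PBCform AP V → PBCform AP V → PBCform AP V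
  | por : PBCform AP V → PBCform AP V → PBCform AP V

/-- Semantics of the positive Boolean closure. -/
def PBCform.sat {AP V : Type} [DecidableEq V] (A : V → Trace AP)
    (T : Set (Trace AP)) : PBCform AP V → Prop
  | .base f => HForm.hsat A T f
  | .pand f g => f.sat A T ∧ g.sat A T
  | .por f g => f.sat A T ∨ g.sat A T

/-- The base formulas occurring in a positive Boolean combination. -/
def PBCform.bases {AP V : Type} : PBCform AP V → Set (HForm AP V)
  | .base f => {f}
  | .pand f g => f.bases ∪ g.bases
  | .por f g => f.bases ∪ g.bases

/-- A `∀*HyperLTL` sentence: a block of universal quantifiers in front of a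
quantifier-free formula, with no free trace variables. -/
def IsUnivSentence {AP V : Type} (f : HForm AP V) : Prop :=
  (∃ (l : List V) (ψ : HForm AP V), ψ.QFree ∧ f = l.foldr .hall ψ) ∧ f.free = ∅

set_option linter.unusedSectionVars false

section Aux

open Classical in
noncomputable instance : DecidableEq (Trace AP) := Classical.decEq _

variable {AP V : Type} [DecidableEq V]

/-- All full-team assignments satisfy ψ. -/
def AllSat (T : Set (Trace AP)) (ψ : HForm AP V) : Prop :=
  ∀ B : V → Trace AP, (∀ v, B v ∈ T) → HForm.hsat B T ψ

lemma hsat_coincide {ψ : HForm AP V} (hq : ψ.QFree) :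
    ∀ {A B : V → Trace AP} {T : Set (Trace AP)},
      (∀ v ∈ ψ.free, A v = B v) → (HForm.hsat A T ψ ↔ HForm.hsat B T ψ) := by
  induction ψ with
  | atom a v =>
    intro A B T hAB
    have : A v = B v := hAB v rfl
    simp [HForm.hsat, this]
  | hnot φ ih =>
    intro A B T hAB
    simp only [HForm.hsat]
    exact not_congr (ih hq hAB)
  | hand φ ψ ih1 ih2 =>
    intro A B T hAB
    simp only [HForm.hsat]
    exact and_congr (ih1 hq.1 fun v hv => hAB v (Or.inl hv))
      (ih2 hq.2 fun v hv => hAB v (Or.inr hv))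
  | hor φ ψ ih1 ih2 =>
    intro A B T hAB
    simp only [HForm.hsat]
    exact or_congr (ih1 hq.1 fun v hv => hAB v (Or.inl hv))
      (ih2 hq.2 fun v hv => hAB v (Or.inr hv))
  | hnext φ ih =>
    intro A B T hAB
    simp only [HForm.hsat]
    exact ih hq fun v hv => by simp [shiftA, hAB v hv]
  | hglob φ ih =>
    intro A B T hAB
    simp only [HForm.hsat]
    exact forall_congr' fun i => ih hq fun v hv => by simp [shiftA, hAB v hv]
  | huntl φ ψ ih1 ih2 =>
    intro A B T hAB
    simp only [HForm.hsat]
    refine exists_congr fun i => and_congr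
      (ih2 hq.2 fun v hv => by simp [shiftA, hAB v (Or.inr hv)]) ?_
    exact forall_congr' fun j => imp_congr Iff.rfl
      (ih1 hq.1 fun v hv => by simp [shiftA, hAB v (Or.inl hv)])
  | hall v φ ih => exact absurd hq id
  | hex v φ ih => exact absurd hq id

lemma qfree_rename {ρ : V → V} {ψ : HForm AP V} (hq : ψ.QFree) :
    (ψ.rename ρ).QFree := by
  induction ψ with
  | atom a v => trivial
  | hnot φ ih => exact ih hq
  | hand φ ψ ih1 ih2 => exact ⟨ih1 hq.1, ih2 hq.2⟩
  | hor φ ψ ih1 ih2 => exact ⟨ih1 hq.1, ih2 hq.2⟩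
  | hnext φ ih => exact ih hq
  | hglob φ ih => exact ih hq
  | huntl φ ψ ih1 ih2 => exact ⟨ih1 hq.1, ih2 hq.2⟩
  | hall v φ ih => exact absurd hq id
  | hex v φ ih => exact absurd hq id

lemma free_rename {ρ : V → V} {ψ : HForm AP V} (hq : ψ.QFree) :
    (ψ.rename ρ).free = ρ '' ψ.free := by
  induction ψ with
  | atom a v => simp [HForm.rename, HForm.free]
  | hnot φ ih => exact ih hq
  | hand φ ψ ih1 ih2 =>
    simp only [HForm.rename, HForm.free, ih1 hq.1, ih2 hq.2, Set.image_union]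
  | hor φ ψ ih1 ih2 =>
    simp only [HForm.rename, HForm.free, ih1 hq.1, ih2 hq.2, Set.image_union]
  | hnext φ ih => exact ih hq
  | hglob φ ih => exact ih hq
  | huntl φ ψ ih1 ih2 =>
    simp only [HForm.rename, HForm.free, ih1 hq.1, ih2 hq.2, Set.image_union]
  | hall v φ ih => exact absurd hq id
  | hex v φ ih => exact absurd hq id

lemma hsat_rename {ρ : V → V} {ψ : HForm AP V} (hq : ψ.QFree) :
    ∀ {A : V → Trace AP} {T : Set (Trace AP)},
      HForm.hsat A T (ψ.rename ρ) ↔ HForm.hsat (A ∘ ρ) T ψ := by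
  induction ψ with
  | atom a v => intro A T; simp [HForm.rename, HForm.hsat, Function.comp]
  | hnot φ ih => intro A T; simp only [HForm.rename, HForm.hsat]; exact not_congr (ih hq)
  | hand φ ψ ih1 ih2 =>
    intro A T; simp only [HForm.rename, HForm.hsat]; exact and_congr (ih1 hq.1) (ih2 hq.2)
  | hor φ ψ ih1 ih2 =>
    intro A T; simp only [HForm.rename, HForm.hsat]; exact or_congr (ih1 hq.1) (ih2 hq.2)
  | hnext φ ih =>
    intro A T; simp only [HForm.rename, HForm.hsat]
    exact (ih hq).trans (by rfl)
  | hglob φ ih =>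
    intro A T; simp only [HForm.rename, HForm.hsat]
    exact forall_congr' fun i => (ih hq).trans (by rfl)
  | huntl φ ψ ih1 ih2 =>
    intro A T; simp only [HForm.rename, HForm.hsat]
    exact exists_congr fun i => and_congr ((ih2 hq.2).trans (by rfl))
      (forall_congr' fun j => imp_congr Iff.rfl ((ih1 hq.1).trans (by rfl)))
  | hall v φ ih => exact absurd hq id
  | hex v φ ih => exact absurd hq id

lemma free_nonempty {ψ : HForm AP V} (hq : ψ.QFree) : ψ.free.Nonempty := by
  induction ψ with
  | atom a v => exact ⟨v, rfl⟩
  | hnot φ ih => exact ih hq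
  | hand φ ψ ih1 ih2 => exact (ih1 hq.1).mono Set.subset_union_left
  | hor φ ψ ih1 ih2 => exact (ih1 hq.1).mono Set.subset_union_left
  | hnext φ ih => exact ih hq
  | hglob φ ih => exact ih hq
  | huntl φ ψ ih1 ih2 => exact (ih1 hq.1).mono Set.subset_union_left
  | hall v φ ih => exact absurd hq id
  | hex v φ ih => exact absurd hq id

lemma free_foldr (l : List V) (ψ : HForm AP V) :
    (l.foldr .hall ψ).free = ψ.free \ {v | v ∈ l} := by
  induction l with
  | nil => simp
  | cons v l ih =>
    simp only [List.foldr_cons, HForm.free, ih]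
    ext w
    simp only [Set.mem_diff, Set.mem_setOf_eq, List.mem_cons, Set.mem_singleton_iff]
    tauto

lemma helper1 {T : Set (Trace AP)} {ψ : HForm AP V} :
    ∀ (l : List V) (A B : V → Trace AP), (∀ v, B v ∈ T) →
      HForm.hsat A T (l.foldr .hall ψ) →
      HForm.hsat (fun w => if w ∈ l then B w else A w) T ψ := by
  intro l
  induction l with
  | nil =>
    intro A B hB hsat
    simpa using hsat
  | cons v l ih =>
    intro A B hB hsat
    have h1 : ∀ t ∈ T, HForm.hsat (Function.update A v t) T (l.foldr .hall ψ) := hsat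
    have h2 := ih (Function.update A v (B v)) B hB (h1 (B v) (hB v))
    have : (fun w => if w ∈ l then B w else Function.update A v (B v) w)
        = fun w => if w ∈ v :: l then B w else A w := by
      funext w
      by_cases hwl : w ∈ l
      · simp [hwl]
      · by_cases hwv : w = v
        · subst hwv; simp [hwl, Function.update]
        · simp [hwl, hwv, Function.update]
    rwa [this] at h2

lemma helper2 {T : Set (Trace AP)} {ψ : HForm AP V} (hq : ψ.QFree) :
    ∀ (l : List V) (A : V → Trace AP), (∀ v ∈ ψ.free, v ∉ l → A v ∈ T) →
      AllSat T ψ → HForm.hsat A T (l.foldr .hall ψ) := by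
  intro l
  induction l with
  | nil =>
    intro A hA hall
    simp only [List.foldr_nil]
    obtain ⟨v₀, hv₀⟩ := free_nonempty hq
    have hT : A v₀ ∈ T := hA v₀ hv₀ List.not_mem_nil
    classical
    have hBT : ∀ v, (fun v => if A v ∈ T then A v else A v₀) v ∈ T := fun v => by
      by_cases hv : A v ∈ T <;> simp [hv, hT]
    refine (hsat_coincide hq (fun v hv => ?_)).2 (hall _ hBT)
    have hvT : A v ∈ T := hA v hv List.not_mem_nil
    simp [hvT]
  | cons v l ih =>
    intro A hA hall
    intro t ht
    apply ih (Function.update A v t) _ hall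
    intro w hw hwl
    by_cases hwv : w = v
    · subst hwv; simpa using ht
    · rw [Function.update_of_ne hwv]
      exact hA w hw (by simp [hwl, hwv])

lemma foldr_hall_iff {T : Set (Trace AP)} {l : List V} {ψ : HForm AP V}
    (hq : ψ.QFree) (hsub : ∀ v ∈ ψ.free, v ∈ l) (A : V → Trace AP) :
    HForm.hsat A T (l.foldr .hall ψ) ↔ AllSat T ψ := by
  constructor
  · intro H B hB
    have h := helper1 l A B hB H
    exact (hsat_coincide hq (fun v hv => by simp [hsub v hv])).1 h
  · intro H
    exact helper2 hq l A (fun v hv hvl => absurd (hsub v hv) hvl) H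

lemma allSat_hand {T : Set (Trace AP)} {ψ₁ ψ₂ : HForm AP V} :
    AllSat T (.hand ψ₁ ψ₂) ↔ AllSat T ψ₁ ∧ AllSat T ψ₂ := by
  constructor
  · intro H
    exact ⟨fun B hB => (H B hB).1, fun B hB => (H B hB).2⟩
  · intro ⟨H1, H2⟩ B hB
    exact ⟨H1 B hB, H2 B hB⟩

lemma allSat_hor {T : Set (Trace AP)} {l₁ : List V} {ψ₁ ψ₂ : HForm AP V}
    (hq1 : ψ₁.QFree) (hq2 : ψ₂.QFree)
    (hsub1 : ∀ v ∈ ψ₁.free, v ∈ l₁) (hdisj : ∀ v ∈ ψ₂.free, v ∉ l₁) :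
    AllSat T (.hor ψ₁ ψ₂) ↔ AllSat T ψ₁ ∨ AllSat T ψ₂ := by
  constructor
  · intro H
    by_contra hcon
    push_neg at hcon
    obtain ⟨h1, h2⟩ := hcon
    simp only [AllSat, not_forall] at h1 h2
    obtain ⟨B₁, hB₁T, hB₁n⟩ := h1
    obtain ⟨B₂, hB₂T, hB₂n⟩ := h2
    classical
    set B : V → Trace AP := fun w => if w ∈ l₁ then B₁ w else B₂ w with hBdef
    have hBT : ∀ v, B v ∈ T := by
      intro v
      by_cases hv : v ∈ l₁ <;> simp [hBdef, hv, hB₁T v, hB₂T v]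
    rcases H B hBT with h | h
    · exact hB₁n ((hsat_coincide hq1 (fun v hv => by
        simp [hBdef, hsub1 v hv])).1 h)
    · exact hB₂n ((hsat_coincide hq2 (fun v hv => by
        simp [hBdef, hdisj v hv])).1 h)
  · rintro (H | H) B hB
    · exact Or.inl (H B hB)
    · exact Or.inr (H B hB)

lemma allSat_rename {T : Set (Trace AP)} {ρ : V → V} {ψ : HForm AP V}
    (hq : ψ.QFree) (hinj : Set.InjOn ρ ψ.free) :
    AllSat T (ψ.rename ρ) ↔ AllSat T ψ := by
  constructor
  · intro H B hB
    classical
    set B' : V → Trace AP := fun v =>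
      if h : ∃ w ∈ ψ.free, ρ w = v then B h.choose else B v with hB'def
    have hB'T : ∀ v, B' v ∈ T := by
      intro v
      by_cases h : ∃ w ∈ ψ.free, ρ w = v <;> simp [hB'def, h, hB _]
    have h1 := (hsat_rename hq).1 (H B' hB'T)
    refine (hsat_coincide hq (fun w hw => ?_)).1 h1
    have hex : ∃ w' ∈ ψ.free, ρ w' = ρ w := ⟨w, hw, rfl⟩
    have hch := hex.choose_spec
    have heq : hex.choose = w := hinj hch.1 hw hch.2
    simp only [Function.comp, hB'def, dif_pos hex, heq]
  · intro H B hB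
    exact (hsat_rename hq).2 (H (B ∘ ρ) (fun v => hB _))

end Aux


/-- PBC(∀*HyperLTL) ≡ ∀*HyperLTL. -/
theorem pbc_forall_hyperLTL_collapse {AP V : Type} [DecidableEq V] [Infinite V]
    (Φ : PBCform AP V) (h : ∀ b ∈ Φ.bases, IsUnivSentence b) :
    ∃ ψ : HForm AP V, IsUnivSentence ψ ∧
      ∀ (T : Set (Trace AP)) (A : V → Trace AP), Φ.sat A T ↔ HForm.hsat A T ψ := by
  suffices h' : ∃ (ψ : HForm AP V) (l : List V), ψ.QFree ∧ (∀ v ∈ ψ.free, v ∈ l) ∧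
      ∀ (T : Set (Trace AP)) (A : V → Trace AP), Φ.sat A T ↔ AllSat T ψ by
    obtain ⟨ψ, l, hq, hsub, hsem⟩ := h'
    refine ⟨l.foldr .hall ψ, ⟨⟨l, ψ, hq, rfl⟩, ?_⟩, ?_⟩
    · rw [free_foldr]
      exact Set.diff_eq_empty.2 hsub
    · intro T A
      rw [hsem T A, foldr_hall_iff hq hsub]
  revert h
  induction Φ with
  | base f =>
    intro h
    obtain ⟨⟨l, ψ, hq, rfl⟩, hfree⟩ := h f (Set.mem_singleton f)
    have hsub : ∀ v ∈ ψ.free, v ∈ l := by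
      intro v hv
      by_contra hvl
      have hmem : v ∈ (l.foldr HForm.hall ψ).free := by
        rw [free_foldr]; exact ⟨hv, hvl⟩
      rw [hfree] at hmem
      exact hmem
    exact ⟨ψ, l, hq, hsub, fun T A => foldr_hall_iff hq hsub A⟩
  | pand f g ihf ihg =>
    intro h
    obtain ⟨ψ₁, l₁, hq1, hs1, he1⟩ := ihf (fun b hb => h b (Or.inl hb))
    obtain ⟨ψ₂, l₂, hq2, hs2, he2⟩ := ihg (fun b hb => h b (Or.inr hb))
    refine ⟨.hand ψ₁ ψ₂, l₁ ++ l₂, ⟨hq1, hq2⟩, ?_, ?_⟩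
    · rintro v (hv | hv)
      · exact List.mem_append_left _ (hs1 v hv)
      · exact List.mem_append_right _ (hs2 v hv)
    · intro T A
      simp only [PBCform.sat]
      rw [he1 T A, he2 T A, allSat_hand]
  | por f g ihf ihg =>
    intro h
    obtain ⟨ψ₁, l₁, hq1, hs1, he1⟩ := ihf (fun b hb => h b (Or.inl hb))
    obtain ⟨ψ₂, l₂, hq2, hs2, he2⟩ := ihg (fun b hb => h b (Or.inr hb))
    -- rename ψ₂ away from l₁
    have hinf : ({v | v ∈ l₁} : Set V)ᶜ.Infinite := (l₁.finite_toSet).infinite_compl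
    obtain ⟨t, htsub, htcard⟩ := hinf.exists_subset_card_eq l₂.toFinset.card
    classical
    let e : l₂.toFinset ≃ t := Finset.equivOfCardEq htcard.symm
    set ρ : V → V := fun v => if hv : v ∈ l₂.toFinset then (e ⟨v, hv⟩ : V) else v with hρdef
    have hρim : ∀ v ∈ l₂, ρ v ∉ l₁ := by
      intro v hv hmem
      have hv' : v ∈ l₂.toFinset := List.mem_toFinset.2 hv
      have : ρ v = (e ⟨v, hv'⟩ : V) := dif_pos hv'
      rw [this] at hmem
      exact htsub (e ⟨v, hv'⟩).2 hmem
    have hρinj : Set.InjOn ρ ψ₂.free := by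
      intro a ha b hb hab
      have ha' : a ∈ l₂.toFinset := List.mem_toFinset.2 (hs2 a ha)
      have hb' : b ∈ l₂.toFinset := List.mem_toFinset.2 (hs2 b hb)
      rw [show ρ a = (e ⟨a, ha'⟩ : V) from dif_pos ha',
        show ρ b = (e ⟨b, hb'⟩ : V) from dif_pos hb'] at hab
      have := e.injective (Subtype.ext hab)
      exact congrArg Subtype.val this
    have hq2' : (ψ₂.rename ρ).QFree := qfree_rename hq2
    have hfree2' : (ψ₂.rename ρ).free = ρ '' ψ₂.free := free_rename hq2
    have hdisj : ∀ v ∈ (ψ₂.rename ρ).free, v ∉ l₁ := by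
      intro v hv
      rw [hfree2'] at hv
      obtain ⟨w, hw, rfl⟩ := hv
      exact hρim w (hs2 w hw)
    refine ⟨.hor ψ₁ (ψ₂.rename ρ), l₁ ++ l₂.map ρ, ⟨hq1, hq2'⟩, ?_, ?_⟩
    · rintro v (hv | hv)
      · exact List.mem_append_left _ (hs1 v hv)
      · rw [hfree2'] at hv
        obtain ⟨w, hw, rfl⟩ := hv
        exact List.mem_append_right _ (List.mem_map.2 ⟨w, hs2 w hw, rfl⟩)
    · intro T A
      simp only [PBCform.sat]
      rw [he1 T A, he2 T A, ← allSat_rename hq2 hρinj,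
        allSat_hor hq1 hq2' hs1 hdisj]
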